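/- Let C_N be the cycle graph on N ≥ 3 vertices. For every real weight function w on its edges whose total weight is W = 1, the second smallest eigenvalue of the weighted graph Laplacian satisfies λ_2(L_G(w)) ≤ 2(1 − cos(2π/N))/N, with equality when every edge carries the weight 1/N. Consequently, the optimal SLEM of the fastest discrete-time quantum consensus problem on the cycle in the case N = d²+1 equals (N − 2(1 − cos(2π/N)))/N, attained at uniform edge weight 1/N. -/

import Mathlib

open Matrix Finset

attribute [local instance] Classical.propDecidable

/-- The weighted graph Laplacian of a simple graph on `Fin N`. -/
noncomputable def graphLap (N : ℕ) (G : SimpleGraph (Fin N)) (w : Fin N → Fin N → ℝ) :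
    Matrix (Fin N) (Fin N) ℝ :=
  Matrix.of fun i j =>
    if i = j then ∑ k, (if G.Adj i k then w i k else 0)
    else if G.Adj i j then -w i j else 0

/-- Total weight of a weighted graph on `Fin N`. -/
noncomputable def totalW (N : ℕ) (G : SimpleGraph (Fin N)) (w : Fin N → Fin N → ℝ) : ℝ :=
  ∑ i, ∑ j, if i < j ∧ G.Adj i j then w i j else 0

/-- Multiset of eigenvalues (with multiplicity) of a real symmetric matrix. -/
noncomputable def eigs {m : Type*} [Fintype m] [DecidableEq m] (M : Matrix m m ℝ) : Multiset ℝ :=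
  if h : M.IsHermitian then Finset.univ.val.map h.eigenvalues else 0

/-- The second smallest eigenvalue (with multiplicity) of a real symmetric matrix. -/
noncomputable def lambda2 {m : Type*} [Fintype m] [DecidableEq m] (M : Matrix m m ℝ) : ℝ :=
  ((eigs M).sort (· ≤ ·)).getD 1 0

/-- The cycle graph on `Fin N`, with edges `{i, i+1 mod N}`. -/
def cycleGraph (N : ℕ) : SimpleGraph (Fin N) :=
  SimpleGraph.fromRel (fun i j => (j : ℕ) = ((i : ℕ) + 1) % N)


section Aux
open scoped RealInnerProductSpace


/-- identity "cast" from plain functions to Euclidean space -/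
def tE {N : ℕ} (v : Fin N → ℝ) : EuclideanSpace ℝ (Fin N) := WithLp.toLp 2 v

variable {N : ℕ} {M : Matrix (Fin N) (Fin N) ℝ}

lemma euc_inner (x y : EuclideanSpace ℝ (Fin N)) : ⟪x, y⟫ = ∑ i, x i * y i := by
  rw [PiLp.inner_apply]
  simp [RCLike.inner_apply, mul_comm]

lemma inner_mulVec_symm (hM : M.IsHermitian) (u x : EuclideanSpace ℝ (Fin N)) :
    ⟪u, tE (M *ᵥ x)⟫ = ⟪tE (M *ᵥ u), x⟫ := by
  rw [euc_inner, euc_inner]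
  show ∑ i, u i * (M *ᵥ x) i = ∑ i, (M *ᵥ u) i * x i
  simp only [Matrix.mulVec, dotProduct, Finset.sum_mul, Finset.mul_sum]
  rw [Finset.sum_comm]
  refine Finset.sum_congr rfl fun j _ => Finset.sum_congr rfl fun i _ => ?_
  have h : M j i = M i j := by
    have := congrFun (congrFun hM j) i
    simpa [Matrix.conjTranspose_apply] using this.symm
  rw [h]; ring

lemma mulVec_expand (hM : M.IsHermitian) (z : EuclideanSpace ℝ (Fin N)) :
    tE (M *ᵥ z) =
      ∑ i, (hM.eigenvalues i * hM.eigenvectorBasis.repr z i) • hM.eigenvectorBasis i := by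
  conv_lhs => rw [← hM.eigenvectorBasis.sum_repr z]
  have h0 : tE (M *ᵥ (∑ i, hM.eigenvectorBasis.repr z i • hM.eigenvectorBasis i :
      EuclideanSpace ℝ (Fin N))) =
      ∑ i, hM.eigenvectorBasis.repr z i • tE (M *ᵥ hM.eigenvectorBasis i) := by
    simp only [tE, WithLp.ofLp_sum, WithLp.ofLp_smul, Matrix.mulVec_sum, Matrix.mulVec_smul,
      WithLp.toLp_sum, WithLp.toLp_smul]
  rw [h0]
  refine Finset.sum_congr rfl fun i _ => ?_
  have h2 : (M *ᵥ (hM.eigenvectorBasis i : Fin N → ℝ)) =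
      hM.eigenvalues i • (hM.eigenvectorBasis i : Fin N → ℝ) := hM.mulVec_eigenvectorBasis i
  show hM.eigenvectorBasis.repr z i • tE (M *ᵥ (hM.eigenvectorBasis i : Fin N → ℝ)) = _
  rw [show tE (M *ᵥ (hM.eigenvectorBasis i : Fin N → ℝ)) =
    (hM.eigenvalues i • (hM.eigenvectorBasis i : EuclideanSpace ℝ (Fin N))) from by rw [tE, h2]; rfl]
  rw [smul_smul, mul_comm]

lemma inner_mulVec_eq (hM : M.IsHermitian) (z : EuclideanSpace ℝ (Fin N)) :
    ⟪z, tE (M *ᵥ z)⟫ = ∑ i, hM.eigenvalues i * (hM.eigenvectorBasis.repr z i)^2 := by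
  rw [mulVec_expand hM z, inner_sum]
  refine Finset.sum_congr rfl fun i _ => ?_
  rw [real_inner_smul_right, real_inner_comm, ← hM.eigenvectorBasis.repr_apply_apply]
  ring

lemma norm_sq_eq_sum_repr {ι : Type*} [Fintype ι]
    (B : OrthonormalBasis ι ℝ (EuclideanSpace ℝ (Fin N)))
    (z : EuclideanSpace ℝ (Fin N)) : ‖z‖^2 = ∑ i, (B.repr z i)^2 := by
  rw [← real_inner_self_eq_norm_sq, ← B.repr.inner_map_map z z, PiLp.inner_apply]
  refine Finset.sum_congr rfl fun i _ => ?_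
  simp [sq]
lemma sorted_getD_one_le {l : List ℝ} (hl : l.Pairwise (· ≤ ·)) {t : ℝ}
    (h : 2 ≤ Multiset.countP (· ≤ t) (l : Multiset ℝ)) : l.getD 1 0 ≤ t := by
  match l with
  | [] => simp at h
  | [a] =>
    have := Multiset.countP_le_card (· ≤ t) (([a] : List ℝ) : Multiset ℝ)
    simp only [Multiset.coe_card, List.length_singleton] at this; omega
  | a :: b :: r =>
    show b ≤ t
    by_contra hbt
    push_neg at hbt
    have h0 : Multiset.countP (· ≤ t) ((b :: r : List ℝ) : Multiset ℝ) = 0 := by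
      rw [Multiset.countP_eq_zero]
      intro x hx
      have hbx : b ≤ x := by
        rcases List.mem_cons.1 (by exact_mod_cast hx) with h' | h'
        · exact h'.ge
        · exact List.rel_of_pairwise_cons hl.of_cons h'
      exact not_le.2 (lt_of_lt_of_le hbt hbx)
    have : ((a :: b :: r : List ℝ) : Multiset ℝ) = a ::ₘ ((b :: r : List ℝ) : Multiset ℝ) := rfl
    rw [this, Multiset.countP_cons, h0] at h
    split at h <;> omega

lemma le_sorted_getD_one {l : List ℝ} (hl : l.Pairwise (· ≤ ·)) {t : ℝ} (hlen : 2 ≤ l.length)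
    (h : Multiset.countP (· < t) (l : Multiset ℝ) ≤ 1) : t ≤ l.getD 1 0 := by
  match l with
  | [] => simp at hlen
  | [a] => simp at hlen
  | a :: b :: r =>
    show t ≤ b
    by_contra hbt
    push_neg at hbt
    have hab : a ≤ b := List.rel_of_pairwise_cons hl (a' := b) (by simp)
    have : ((a :: b :: r : List ℝ) : Multiset ℝ) = a ::ₘ b ::ₘ ((r : List ℝ) : Multiset ℝ) := rfl
    rw [this, Multiset.countP_cons, Multiset.countP_cons, if_pos hbt,
      if_pos (lt_of_le_of_lt hab hbt)] at h
    omega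

lemma lambda2_le_of_pair {N : ℕ} {M : Matrix (Fin N) (Fin N) ℝ}
    (hM : M.IsHermitian) {t : ℝ} {i j : Fin N} (hij : i ≠ j)
    (hi : hM.eigenvalues i ≤ t) (hj : hM.eigenvalues j ≤ t) : lambda2 M ≤ t := by
  have he : eigs M = Finset.univ.val.map hM.eigenvalues := by rw [eigs, dif_pos hM]
  apply sorted_getD_one_le (Multiset.pairwise_sort _ _)
  rw [Multiset.sort_eq, he, Multiset.countP_map]
  have : 1 < (Finset.filter (fun a => hM.eigenvalues a ≤ t) Finset.univ).card :=
    Finset.one_lt_card.2 ⟨i, by simp [hi], j, by simp [hj], hij⟩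
  exact this

lemma le_lambda2 {N : ℕ} (hN : 2 ≤ N) {M : Matrix (Fin N) (Fin N) ℝ}
    (hM : M.IsHermitian) {t : ℝ}
    (h : ∀ i j : Fin N, hM.eigenvalues i < t → hM.eigenvalues j < t → i = j) :
    t ≤ lambda2 M := by
  have he : eigs M = Finset.univ.val.map hM.eigenvalues := by rw [eigs, dif_pos hM]
  apply le_sorted_getD_one (Multiset.pairwise_sort _ _)
  · rw [Multiset.length_sort, he, Multiset.card_map]
    simpa using hN
  · rw [Multiset.sort_eq, he, Multiset.countP_map]
    have : (Finset.filter (fun a => hM.eigenvalues a < t) Finset.univ).card ≤ 1 :=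
      Finset.card_le_one.2 (fun a ha b hb => h a b (by simpa using ha) (by simpa using hb))
    exact this

lemma lambda2_le_gen (hM : M.IsHermitian)
    {u x : EuclideanSpace ℝ (Fin N)} (hu : u ≠ 0) (hx : x ≠ 0)
    (hMu : M *ᵥ (u : Fin N → ℝ) = 0) (hux : ⟪u, x⟫ = 0) {t : ℝ} (ht : 0 ≤ t)
    (hR : ⟪x, tE (M *ᵥ x)⟫ ≤ t * ‖x‖^2) :
    lambda2 M ≤ t := by
  by_contra hlt
  push_neg at hlt
  have hone : ∀ i j : Fin N, i ≠ j → hM.eigenvalues i ≤ t → ¬ (hM.eigenvalues j ≤ t) := by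
    intro i j hij hi hj
    exact absurd (lambda2_le_of_pair hM hij hi hj) (not_le.2 hlt)
  set B := hM.eigenvectorBasis with hB
  set f := hM.eigenvalues with hf
  obtain ⟨z, hz0, hzS, hzq⟩ :
      ∃ z : EuclideanSpace ℝ (Fin N), z ≠ 0 ∧
        (∀ i, f i ≤ t → B.repr z i = 0) ∧
        ⟪z, tE (M *ᵥ z)⟫ ≤ t * ‖z‖^2 := by
    by_cases hS : ∃ i₀, f i₀ ≤ t
    · obtain ⟨i₀, hi₀⟩ := hS
      have huniq : ∀ i, f i ≤ t → i = i₀ := fun i hi => by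
        by_contra hne; exact hone i i₀ hne hi hi₀
      by_cases hp : B.repr x i₀ = 0
      · exact ⟨x, hx, fun i hi => (huniq i hi) ▸ hp, hR⟩
      · set s := B.repr u i₀ / B.repr x i₀ with hs
        have hMz : (M *ᵥ ((u - s • x : EuclideanSpace ℝ (Fin N)) : Fin N → ℝ)) =
            (-s) • (M *ᵥ (x : Fin N → ℝ)) := by
          show M *ᵥ ((u : Fin N → ℝ) - s • (x : Fin N → ℝ)) = _
          rw [Matrix.mulVec_sub, hMu, Matrix.mulVec_smul]
          ext k; simp
        have hinnz : ⟪u, u - s • x⟫ = ‖u‖^2 := by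
          rw [inner_sub_right, real_inner_smul_right, hux, real_inner_self_eq_norm_sq]; ring
        have hq : ⟪u - s • x, tE (M *ᵥ ((u - s • x : EuclideanSpace ℝ (Fin N)) : Fin N → ℝ))⟫ =
            s^2 * ⟪x, tE (M *ᵥ (x : Fin N → ℝ))⟫ := by
          rw [show tE (M *ᵥ ((u - s • x : EuclideanSpace ℝ (Fin N)) : Fin N → ℝ)) =
            (-s) • tE (M *ᵥ (x : Fin N → ℝ)) from by rw [hMz]; rfl]
          rw [real_inner_smul_right, inner_sub_left, real_inner_smul_left]
          have h0 : ⟪u, tE (M *ᵥ (x : Fin N → ℝ))⟫ = 0 := by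
            rw [inner_mulVec_symm hM, hMu]
            show ⟪(0 : EuclideanSpace ℝ (Fin N)), x⟫ = 0
            exact inner_zero_left x
          rw [h0]; ring
        have hnz : ‖u - s • x‖^2 = ‖u‖^2 + s^2 * ‖x‖^2 := by
          rw [norm_sub_sq_real, real_inner_smul_right, hux, norm_smul]
          first
          | (simp [mul_pow, sq_abs]; ring)
          | simp [mul_pow, sq_abs]
        refine ⟨u - s • x, ?_, ?_, ?_⟩
        · intro h0
          rw [h0, inner_zero_right] at hinnz
          exact hu (norm_eq_zero.mp (by nlinarith [norm_nonneg u]))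
        · intro i hi
          rw [huniq i hi]
          have : B.repr (u - s • x) = B.repr u - s • B.repr x := by
            rw [map_sub, _root_.map_smul]
          rw [this]
          show B.repr u i₀ - s * B.repr x i₀ = 0
          rw [hs, div_mul_cancel₀ _ hp]; ring
        · rw [hq, hnz]
          nlinarith [sq_nonneg s, norm_nonneg x, norm_nonneg u, sq_nonneg (‖u‖)]
    · push_neg at hS
      exact ⟨x, hx, fun i hi => absurd hi (not_le.2 (hS i)), hR⟩
  -- contradiction from eigen expansion
  have e1 : ⟪z, tE (M *ᵥ z)⟫ = ∑ i, f i * (B.repr z i)^2 := inner_mulVec_eq hM z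
  have e2 : ‖z‖^2 = ∑ i, (B.repr z i)^2 := norm_sq_eq_sum_repr B z
  have hr : ∃ i, B.repr z i ≠ 0 := by
    by_contra h; push_neg at h
    apply hz0
    have h0 : B.repr z = 0 := by ext i; exact h i
    simpa using congrArg B.repr.symm h0
  obtain ⟨i₁, hi₁⟩ := hr
  have hfi₁ : t < f i₁ := by
    by_contra h; push_neg at h; exact hi₁ (hzS i₁ h)
  have hpos : 0 < ∑ i, (f i - t) * (B.repr z i)^2 := by
    apply Finset.sum_pos' (fun i _ => ?_) ⟨i₁, Finset.mem_univ i₁, by nlinarith [sq_nonneg (B.repr z i₁), (pow_pos (abs_pos.mpr hi₁) 2), sq_abs (B.repr z i₁)]⟩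
    by_cases hfi : f i ≤ t
    · rw [hzS i hfi]; simp
    · push_neg at hfi
      have := sq_nonneg (B.repr z i)
      nlinarith
  have hsum : ∑ i, (f i - t) * (B.repr z i)^2 =
      (∑ i, f i * (B.repr z i)^2) - t * ∑ i, (B.repr z i)^2 := by
    rw [Finset.mul_sum, ← Finset.sum_sub_distrib]
    refine Finset.sum_congr rfl fun i _ => by ring
  rw [hsum, ← e1, ← e2] at hpos
  linarith

lemma le_lambda2_gen (hN : 2 ≤ N) (hM : M.IsHermitian)
    {u : EuclideanSpace ℝ (Fin N)} {c : ℝ}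
    (h : ∀ v : EuclideanSpace ℝ (Fin N), ⟪u, v⟫ = 0 →
      c * ‖v‖^2 ≤ ⟪v, tE (M *ᵥ v)⟫) :
    c ≤ lambda2 M := by
  apply le_lambda2 hN hM
  intro i j hi hj
  by_contra hij
  set B := hM.eigenvectorBasis with hB
  set f := hM.eigenvalues with hf
  set p := ⟪u, (B i : EuclideanSpace ℝ (Fin N))⟫ with hp
  set q := ⟪u, (B j : EuclideanSpace ℝ (Fin N))⟫ with hq
  obtain ⟨a, b, hab, hor⟩ : ∃ a b : ℝ, a * p + b * q = 0 ∧ (a ≠ 0 ∨ b ≠ 0) := by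
    by_cases hp0 : p = 0
    · exact ⟨1, 0, by rw [hp0]; ring, Or.inl one_ne_zero⟩
    · exact ⟨q, -p, by ring, Or.inr (neg_ne_zero.2 hp0)⟩
  set z : EuclideanSpace ℝ (Fin N) := a • (B i : EuclideanSpace ℝ (Fin N)) + b • B j with hz
  have huz : ⟪u, z⟫ = 0 := by
    rw [hz, inner_add_right, real_inner_smul_right, real_inner_smul_right]
    exact hab
  have hrepr : ∀ k, B.repr z k =
      a * (if k = i then 1 else 0) + b * (if k = j then 1 else 0) := by
    intro k
    rw [hz, map_add, _root_.map_smul, _root_.map_smul, B.repr_self, B.repr_self]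
    show a * (EuclideanSpace.single i (1:ℝ)) k + b * (EuclideanSpace.single j (1:ℝ)) k = _
    rw [EuclideanSpace.single_apply, EuclideanSpace.single_apply]
  have e1 : ⟪z, tE (M *ᵥ z)⟫ = a^2 * f i + b^2 * f j := by
    rw [inner_mulVec_eq hM z]
    have : ∀ k, f k * (B.repr z k)^2 =
        (if k = i then a^2 * f i else 0) + (if k = j then b^2 * f j else 0) := by
      intro k
      rw [hrepr k]
      by_cases hki : k = i
      · subst hki
        rw [if_pos rfl, if_neg hij, if_pos rfl, if_neg hij]
        ring
      · rw [if_neg hki, if_neg hki]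
        by_cases hkj : k = j
        · subst hkj; rw [if_pos rfl, if_pos rfl]; ring
        · rw [if_neg hkj, if_neg hkj]; ring
    rw [Finset.sum_congr rfl (fun k _ => this k), Finset.sum_add_distrib,
      Finset.sum_ite_eq' Finset.univ i, Finset.sum_ite_eq' Finset.univ j]
    simp
  have e2 : ‖z‖^2 = a^2 + b^2 := by
    rw [norm_sq_eq_sum_repr B z]
    have : ∀ k, (B.repr z k)^2 =
        (if k = i then a^2 else 0) + (if k = j then b^2 else 0) := by
      intro k
      rw [hrepr k]
      by_cases hki : k = i
      · subst hki
        rw [if_pos rfl, if_neg hij, if_pos rfl, if_neg hij]; ring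
      · rw [if_neg hki, if_neg hki]
        by_cases hkj : k = j
        · subst hkj; rw [if_pos rfl, if_pos rfl]; ring
        · rw [if_neg hkj, if_neg hkj]; ring
    rw [Finset.sum_congr rfl (fun k _ => this k), Finset.sum_add_distrib,
      Finset.sum_ite_eq' Finset.univ i, Finset.sum_ite_eq' Finset.univ j]
    simp
  have hc := h z huz
  rw [e1, e2] at hc
  rcases hor with ha | hb
  · nlinarith [sq_nonneg a, sq_nonneg b, pow_pos (abs_pos.mpr ha) 2, sq_abs a]
  · nlinarith [sq_nonneg a, sq_nonneg b, pow_pos (abs_pos.mpr hb) 2, sq_abs b]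

variable {N : ℕ} [NeZero N]

lemma fin_one_ne_zero' (hN : 3 ≤ N) : (1 : Fin N) ≠ 0 := by
  intro h
  have := congrArg Fin.val h
  rw [Fin.val_one'] at this
  simp [Nat.mod_eq_of_lt (show 1 < N by omega)] at this

lemma fin_two_ne_zero' (hN : 3 ≤ N) : (1 : Fin N) + 1 ≠ 0 := by
  intro h
  have h2 := congrArg Fin.val h
  simp only [Fin.val_add, Fin.val_one', Fin.val_zero] at h2
  rw [Nat.mod_eq_of_lt (show 1 < N by omega)] at h2
  rw [Nat.mod_eq_of_lt (show 1 + 1 < N by omega)] at h2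
  omega

lemma cycle_adj (hN : 3 ≤ N) (i j : Fin N) :
    (cycleGraph N).Adj i j ↔ (j = i + 1 ∨ i = j + 1) := by
  have h1 : ∀ a b : Fin N, ((b : ℕ) = ((a : ℕ) + 1) % N ↔ b = a + 1) := by
    intro a b
    rw [Fin.ext_iff, Fin.add_def, Fin.val_one']
    rw [Nat.mod_eq_of_lt (show 1 < N by omega)]
  have hne : ∀ a : Fin N, a + 1 ≠ a := by
    intro a h
    have := add_left_cancel (a := a) (b := (1 : Fin N)) (c := 0) (by rw [add_zero]; exact h)
    exact fin_one_ne_zero' hN this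
  rw [cycleGraph, SimpleGraph.fromRel_adj, h1, h1]
  constructor
  · rintro ⟨-, h⟩; exact h
  · rintro (h | h)
    · exact ⟨by rw [h]; exact fun hc => hne i hc.symm, Or.inl h⟩
    · exact ⟨by rw [h]; exact fun hc => hne j hc, Or.inr h⟩

lemma cycle_not_both (hN : 3 ≤ N) {i j : Fin N} : ¬(j = i + 1 ∧ i = j + 1) := by
  rintro ⟨h1, h2⟩
  rw [h1, add_assoc] at h2
  have : (1 : Fin N) + 1 = 0 := by
    have := add_left_cancel (a := i) (b := (1:Fin N) + 1) (c := 0) (by rw [add_zero]; exact h2.symm)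
    exact this
  exact fin_two_ne_zero' hN this

lemma sum_adj (hN : 3 ≤ N) (g : Fin N → Fin N → ℝ) (hg : ∀ i j, g i j = g j i) :
    ∑ i, ∑ j, (if (cycleGraph N).Adj i j then g i j else 0) = 2 * ∑ k, g k (k + 1) := by
  have inner : ∀ i : Fin N, (∑ j, if (cycleGraph N).Adj i j then g i j else 0)
      = g i (i + 1) + g i (i - 1) := by
    intro i
    have hsplit : ∀ j, (if (cycleGraph N).Adj i j then g i j else 0) =
        (if j = i + 1 then g i j else 0) + (if j = i - 1 then g i j else 0) := by
      intro j
      have hiff : i = j + 1 ↔ j = i - 1 := by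
        constructor
        · intro h; rw [h]; simp
        · intro h; rw [h]; simp
      by_cases h1 : j = i + 1 <;> by_cases h2 : j = i - 1
      · exfalso
        exact cycle_not_both hN ⟨h1, hiff.2 h2⟩
      · rw [if_pos ((cycle_adj hN i j).2 (Or.inl h1)), if_pos h1, if_neg h2]; ring
      · rw [if_pos ((cycle_adj hN i j).2 (Or.inr (hiff.2 h2))), if_neg h1, if_pos h2]; ring
      · rw [if_neg, if_neg h1, if_neg h2]; · ring
        rw [cycle_adj hN]
        rintro (h | h)
        · exact h1 h
        · exact h2 (hiff.1 h)
    rw [Finset.sum_congr rfl (fun j _ => hsplit j), Finset.sum_add_distrib,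
      Finset.sum_ite_eq' Finset.univ (i + 1) (g i), Finset.sum_ite_eq' Finset.univ (i - 1) (g i)]
    simp
  rw [Finset.sum_congr rfl (fun i _ => inner i), Finset.sum_add_distrib]
  have hre : (∑ i : Fin N, g i (i - 1)) = ∑ k : Fin N, g k (k + 1) := by
    rw [show (∑ i : Fin N, g i (i-1)) = ∑ k : Fin N, g (k+1) k from
      Fintype.sum_equiv (Equiv.subRight (1 : Fin N)) _ _ (fun k => by simp)]
    exact Finset.sum_congr rfl fun k _ => hg (k+1) k
  rw [hre]; ring

lemma totalW_cycle (hN : 3 ≤ N) (w : Fin N → Fin N → ℝ) (hw : ∀ i j, w i j = w j i) :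
    totalW N (cycleGraph N) w = ∑ k, w k (k + 1) := by
  have key : totalW N (cycleGraph N) w + (∑ i, ∑ j, if j < i ∧ (cycleGraph N).Adj i j then w i j else 0)
      = ∑ i, ∑ j, if (cycleGraph N).Adj i j then w i j else 0 := by
    rw [totalW, ← Finset.sum_add_distrib]
    refine Finset.sum_congr rfl fun i _ => ?_
    rw [← Finset.sum_add_distrib]
    refine Finset.sum_congr rfl fun j _ => ?_
    by_cases hadj : (cycleGraph N).Adj i j
    · have hne : i ≠ j := hadj.ne
      rcases lt_or_gt_of_ne hne with hlt | hgt
      · rw [if_pos ⟨hlt, hadj⟩, if_neg (fun hc => absurd hc.1 (not_lt.2 hlt.le)), if_pos hadj]; ring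
      · rw [if_neg (fun hc => absurd hc.1 (not_lt.2 hgt.le)), if_pos ⟨hgt, hadj⟩, if_pos hadj]; ring
    · rw [if_neg (fun hc => hadj hc.2), if_neg (fun hc => hadj hc.2), if_neg hadj]; ring
  have swap : (∑ i, ∑ j, if j < i ∧ (cycleGraph N).Adj i j then w i j else 0)
      = totalW N (cycleGraph N) w := by
    rw [totalW, Finset.sum_comm]
    refine Finset.sum_congr rfl fun j _ => Finset.sum_congr rfl fun i _ => ?_
    by_cases h : j < i ∧ (cycleGraph N).Adj i j
    · rw [if_pos h, if_pos ⟨h.1, h.2.symm⟩, hw]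
    · rw [if_neg h, if_neg (fun hc => h ⟨hc.1, hc.2.symm⟩)]
  have hS := sum_adj hN w hw
  have : totalW N (cycleGraph N) w + totalW N (cycleGraph N) w = 2 * ∑ k, w k (k + 1) := by
    rw [← hS, ← key, swap]
  linarith

lemma graphLap_isHermitian (G : SimpleGraph (Fin N)) (w : Fin N → Fin N → ℝ)
    (hw : ∀ i j, w i j = w j i) : (graphLap N G w).IsHermitian := by
  show (graphLap N G w).conjTranspose = graphLap N G w
  ext i j
  rw [Matrix.conjTranspose_apply]
  show star (graphLap N G w j i) = graphLap N G w i j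
  rw [show ∀ r : ℝ, star r = r from fun r => rfl]
  by_cases h : i = j
  · subst h; rfl
  · show (if j = i then _ else _) = (if i = j then _ else _)
    rw [if_neg (Ne.symm h), if_neg h]
    by_cases hadj : G.Adj i j
    · rw [if_pos hadj, if_pos (hadj.symm), hw]
    · rw [if_neg hadj, if_neg (fun hc => hadj hc.symm)]

lemma graphLap_entry_split (G : SimpleGraph (Fin N)) (w : Fin N → Fin N → ℝ) (i j : Fin N) :
    graphLap N G w i j = (if i = j then ∑ k, (if G.Adj i k then w i k else 0) else 0)
      + (if G.Adj i j then -w i j else 0) := by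
  show (if i = j then _ else _) = _
  by_cases h : i = j
  · subst h
    rw [if_pos rfl, if_pos rfl, if_neg (G.irrefl), add_zero]
  · rw [if_neg h, if_neg h, zero_add]

lemma graphLap_mulVec_ones (G : SimpleGraph (Fin N)) (w : Fin N → Fin N → ℝ) :
    graphLap N G w *ᵥ (fun _ => (1 : ℝ)) = 0 := by
  funext i
  show ∑ j, graphLap N G w i j * 1 = 0
  rw [Finset.sum_congr rfl (fun j _ => by rw [graphLap_entry_split, mul_one])]
  rw [Finset.sum_add_distrib, Finset.sum_ite_eq Finset.univ i
    (fun _ => ∑ k, (if G.Adj i k then w i k else 0))]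
  rw [if_pos (Finset.mem_univ i)]
  have : (∑ j, if G.Adj i j then -w i j else 0) = -∑ j, (if G.Adj i j then w i j else 0) := by
    rw [← Finset.sum_neg_distrib]
    exact Finset.sum_congr rfl fun j _ => by rw [apply_ite Neg.neg, neg_zero]
  rw [this]; ring

lemma quad_form_cycle (hN : 3 ≤ N) (w : Fin N → Fin N → ℝ) (hw : ∀ i j, w i j = w j i)
    (v : Fin N → ℝ) :
    v ⬝ᵥ (graphLap N (cycleGraph N) w *ᵥ v) =
      ∑ k, w k (k + 1) * (v k - v (k + 1))^2 := by
  set G := cycleGraph N with hG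
  have hdot : v ⬝ᵥ (graphLap N G w *ᵥ v) =
      ∑ i, ∑ j, (if G.Adj i j then w i j * (v i * v i - v i * v j) else 0) := by
    rw [dotProduct]
    refine Finset.sum_congr rfl fun i _ => ?_
    rw [Matrix.mulVec, dotProduct, Finset.mul_sum]
    rw [Finset.sum_congr rfl (fun j _ => by rw [graphLap_entry_split, add_mul, mul_add])]
    rw [Finset.sum_add_distrib]
    have h1 : (∑ j, v i * ((if i = j then ∑ k, (if G.Adj i k then w i k else 0) else 0) * v j))
        = ∑ j, (if G.Adj i j then w i j * (v i * v i) else 0) := by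
      rw [Finset.sum_eq_single i (fun j _ hji => by
        rw [if_neg (fun hc => hji hc.symm)]; ring) (fun h => absurd (Finset.mem_univ i) h)]
      rw [if_pos rfl]
      rw [show v i * ((∑ k, (if G.Adj i k then w i k else 0)) * v i)
        = (∑ k, (if G.Adj i k then w i k else 0)) * (v i * v i) from by ring]
      rw [Finset.sum_mul]
      refine Finset.sum_congr rfl fun k _ => ?_
      split <;> ring
    rw [h1, ← Finset.sum_add_distrib]
    refine Finset.sum_congr rfl fun j _ => ?_
    by_cases hadj : G.Adj i j
    · rw [if_pos hadj, if_pos hadj, if_pos hadj]; ring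
    · rw [if_neg hadj, if_neg hadj, if_neg hadj]; ring
  have hswap2 : (∑ i, ∑ j, (if G.Adj i j then w i j * (v j * v j - v i * v j) else 0))
      = ∑ i, ∑ j, (if G.Adj i j then w i j * (v i * v i - v i * v j) else 0) := by
    rw [Finset.sum_comm]
    refine Finset.sum_congr rfl fun a _ => Finset.sum_congr rfl fun b _ => ?_
    by_cases hadj : G.Adj a b
    · rw [if_pos ((G.adj_comm a b).1 hadj), if_pos hadj, hw b a]; ring
    · rw [if_neg (fun hc => hadj ((G.adj_comm b a).1 hc)), if_neg hadj]
  have hsum : 2 * (v ⬝ᵥ (graphLap N G w *ᵥ v)) =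
      ∑ i, ∑ j, (if G.Adj i j then w i j * (v i - v j)^2 else 0) := by
    nth_rewrite 1 [two_mul]
    nth_rewrite 2 [hdot]
    nth_rewrite 1 [hdot]
    nth_rewrite 1 [← hswap2]
    rw [← Finset.sum_add_distrib]
    refine Finset.sum_congr rfl fun i _ => ?_
    rw [← Finset.sum_add_distrib]
    refine Finset.sum_congr rfl fun j _ => ?_
    split <;> ring
  have hS := sum_adj hN (fun i j => w i j * (v i - v j)^2)
    (fun i j => by show w i j * (v i - v j)^2 = w j i * (v j - v i)^2; rw [hw i j]; ring)
  rw [hS] at hsum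
  linarith


noncomputable def z1 (N : ℕ) : ℂ := Complex.exp ((2 * Real.pi / N : ℝ) * Complex.I)

variable {N : ℕ}

lemma z1_ne_zero : z1 N ≠ 0 := Complex.exp_ne_zero _

lemma z1_pow (m : ℕ) : z1 N ^ m = Complex.exp ((2 * Real.pi * m / N : ℝ) * Complex.I) := by
  rw [z1, ← Complex.exp_nat_mul]
  congr 1
  push_cast
  ring

lemma z1_pow_N (hN : 3 ≤ N) : z1 N ^ N = 1 := by
  rw [z1_pow]
  have hNR : (N : ℝ) ≠ 0 := by positivity
  rw [show (2 * Real.pi * N / N : ℝ) = 2 * Real.pi from by field_simp]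
  exact_mod_cast Complex.exp_two_pi_mul_I

lemma z1_pow_ne_one (hN : 3 ≤ N) {m : ℕ} (hm0 : 0 < m) (hmN : m < N) : z1 N ^ m ≠ 1 := by
  rw [z1_pow]
  intro h
  rw [Complex.exp_eq_one_iff] at h
  obtain ⟨n, hn⟩ := h
  have hI : ((2 * Real.pi * m / N : ℝ) : ℂ) = (n : ℂ) * (2 * Real.pi) := by
    rw [show ((n:ℂ) * (2 * (Real.pi:ℂ) * Complex.I)) = ((n:ℂ) * (2 * (Real.pi:ℂ))) * Complex.I from by ring] at hn
    exact mul_right_cancel₀ Complex.I_ne_zero hn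
  have hR : (2 * Real.pi * m / N : ℝ) = n * (2 * Real.pi) := by exact_mod_cast hI
  have hNpos : (0:ℝ) < N := by positivity
  have hpi := Real.pi_pos
  have hm0' : (0:ℝ) < m := by exact_mod_cast hm0
  have hmN' : (m:ℝ) < N := by exact_mod_cast hmN
  have hθpos : 0 < (2 * Real.pi * m / N : ℝ) := by positivity
  have hθlt : (2 * Real.pi * m / N : ℝ) < 2 * Real.pi := by
    rw [div_lt_iff₀ hNpos]
    nlinarith
  rcases le_or_gt n 0 with hn0 | hn0
  · have : (n:ℝ) * (2*Real.pi) ≤ 0 := by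
      apply mul_nonpos_of_nonpos_of_nonneg
      · exact_mod_cast hn0
      · positivity
    linarith
  · have hn1 : (1:ℝ) ≤ n := by exact_mod_cast hn0
    nlinarith

lemma z1_pow_inj (hN : 3 ≤ N) {a b : ℕ} (ha : a < N) (hb : b < N)
    (h : z1 N ^ a = z1 N ^ b) : a = b := by
  rcases lt_trichotomy a b with hab | hab | hab
  · exfalso
    have : z1 N ^ a * z1 N ^ (b - a) = z1 N ^ a * 1 := by
      rw [← pow_add, Nat.add_sub_cancel' hab.le, h, mul_one]
    have := mul_left_cancel₀ (pow_ne_zero a z1_ne_zero) this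
    exact z1_pow_ne_one hN (by omega) (by omega) this
  · exact hab
  · exfalso
    have : z1 N ^ b * z1 N ^ (a - b) = z1 N ^ b * 1 := by
      rw [← pow_add, Nat.add_sub_cancel' hab.le, h.symm, mul_one]
    have := mul_left_cancel₀ (pow_ne_zero b z1_ne_zero) this
    exact z1_pow_ne_one hN (by omega) (by omega) this

lemma z1_conj_pow (a : ℕ) : (starRingEnd ℂ) (z1 N ^ a) = (z1 N ^ a)⁻¹ := by
  rw [z1_pow, ← Complex.exp_conj, ← Complex.exp_neg]
  congr 1
  rw [_root_.map_mul, Complex.conj_ofReal, Complex.conj_I]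
  ring

lemma z1_orth (hN : 3 ≤ N) (k l : Fin N) :
    ∑ j : Fin N, z1 N ^ (j.val * k.val) * (starRingEnd ℂ) (z1 N ^ (j.val * l.val))
      = if k = l then (N : ℂ) else 0 := by
  have hterm : ∀ j : Fin N, z1 N ^ (j.val * k.val) * (starRingEnd ℂ) (z1 N ^ (j.val * l.val))
      = (z1 N ^ k.val * (z1 N ^ l.val)⁻¹) ^ j.val := by
    intro j
    rw [z1_conj_pow, mul_pow, inv_pow, ← pow_mul, ← pow_mul, mul_comm j.val k.val,
      mul_comm j.val l.val]
  rw [Finset.sum_congr rfl (fun j _ => hterm j)]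
  rw [Fin.sum_univ_eq_sum_range (fun m => (z1 N ^ k.val * (z1 N ^ l.val)⁻¹) ^ m)]
  by_cases hkl : k = l
  · subst hkl
    rw [mul_inv_cancel₀ (pow_ne_zero _ z1_ne_zero), if_pos rfl]
    simp
  · rw [if_neg hkl]
    have hμ : z1 N ^ k.val * (z1 N ^ l.val)⁻¹ ≠ 1 := by
      intro h
      apply hkl
      have : z1 N ^ k.val = z1 N ^ l.val :=
        (mul_inv_eq_one₀ (pow_ne_zero _ z1_ne_zero)).1 h
      exact Fin.ext (z1_pow_inj hN k.isLt l.isLt this)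
    rw [geom_sum_eq hμ]
    have hμN : (z1 N ^ k.val * (z1 N ^ l.val)⁻¹) ^ N = 1 := by
      rw [mul_pow, inv_pow, ← pow_mul, ← pow_mul, mul_comm k.val N, mul_comm l.val N,
        pow_mul, pow_mul, z1_pow_N hN, one_pow, one_pow]
      simp
    rw [hμN]
    simp

noncomputable def dft (N : ℕ) (v : Fin N → ℝ) (j : Fin N) : ℂ :=
  ∑ k : Fin N, (v k : ℂ) * z1 N ^ (j.val * k.val)

lemma parseval (hN : 3 ≤ N) (v : Fin N → ℝ) :
    ∑ j : Fin N, Complex.normSq (dft N v j) = N * ∑ k, (v k)^2 := by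
  have key : ∑ j : Fin N, (dft N v j * (starRingEnd ℂ) (dft N v j))
      = (N : ℂ) * ∑ k, ((v k : ℂ))^2 := by
    have expand : ∀ j : Fin N, dft N v j * (starRingEnd ℂ) (dft N v j)
        = ∑ k : Fin N, ∑ l : Fin N, (v k : ℂ) * (v l : ℂ) *
            (z1 N ^ (j.val * k.val) * (starRingEnd ℂ) (z1 N ^ (j.val * l.val))) := by
      intro j
      rw [dft, map_sum, Finset.sum_mul_sum]
      refine Finset.sum_congr rfl fun k _ => Finset.sum_congr rfl fun l _ => ?_
      rw [_root_.map_mul, Complex.conj_ofReal]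
      ring
    rw [Finset.sum_congr rfl (fun j _ => expand j)]
    rw [Finset.sum_comm]
    have h1 : ∀ k : Fin N, (∑ j : Fin N, ∑ l : Fin N, (v k : ℂ) * (v l : ℂ) *
        (z1 N ^ (j.val * k.val) * (starRingEnd ℂ) (z1 N ^ (j.val * l.val))))
        = (N:ℂ) * (v k : ℂ)^2 := by
      intro k
      rw [Finset.sum_comm]
      have h2 : ∀ l : Fin N, (∑ j : Fin N, (v k : ℂ) * (v l : ℂ) *
          (z1 N ^ (j.val * k.val) * (starRingEnd ℂ) (z1 N ^ (j.val * l.val))))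
          = (v k : ℂ) * (v l : ℂ) * (if l = k then (N:ℂ) else 0) := by
        intro l
        rw [← Finset.mul_sum]
        congr 1
        have := z1_orth hN k l
        rw [this]
        by_cases h : k = l
        · subst h; simp
        · rw [if_neg h, if_neg (fun hc => h hc.symm)]
      rw [Finset.sum_congr rfl (fun l _ => h2 l)]
      rw [Finset.sum_congr rfl (fun l _ => by
        rw [show (v k : ℂ) * (v l : ℂ) * (if l = k then (N:ℂ) else 0)
          = (if l = k then (v k : ℂ) * (v l : ℂ) * N else 0) from by split <;> ring])]
      rw [Finset.sum_ite_eq' Finset.univ k (fun l => (v k : ℂ) * (v l : ℂ) * N)]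
      rw [if_pos (Finset.mem_univ k)]
      ring
    rw [Finset.sum_congr rfl (fun k _ => h1 k), ← Finset.mul_sum]
  have lhs_cast : ∑ j : Fin N, (dft N v j * (starRingEnd ℂ) (dft N v j))
      = ((∑ j : Fin N, Complex.normSq (dft N v j) : ℝ) : ℂ) := by
    push_cast
    exact Finset.sum_congr rfl fun j _ => (Complex.mul_conj (dft N v j))
  have rhs_cast : (N : ℂ) * ∑ k, ((v k : ℂ))^2 = ((N * ∑ k, (v k)^2 : ℝ) : ℂ) := by
    push_cast
    ring
  rw [lhs_cast, rhs_cast] at key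
  exact_mod_cast key

lemma pow_z1_mod (hN : 3 ≤ N) {a b : ℕ} (h : a % N = b % N) : z1 N ^ a = z1 N ^ b := by
  have hz := z1_pow_N hN
  have key : ∀ c : ℕ, z1 N ^ c = z1 N ^ (c % N) := by
    intro c
    conv_lhs => rw [← Nat.div_add_mod c N]
    rw [pow_add, pow_mul, hz, one_pow, one_mul]
  rw [key a, key b, h]

lemma dft_shift [NeZero N] (hN : 3 ≤ N) (v : Fin N → ℝ) (j : Fin N) :
    ∑ k : Fin N, ((v (k + 1) : ℝ) : ℂ) * z1 N ^ (j.val * k.val)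
      = (starRingEnd ℂ) (z1 N ^ j.val) * dft N v j := by
  have hNZ : NeZero N := ⟨by omega⟩
  have key : (∑ k : Fin N, ((v (k + 1) : ℝ) : ℂ) * z1 N ^ (j.val * k.val)) * z1 N ^ j.val
      = dft N v j := by
    rw [Finset.sum_mul]
    rw [show (∑ k : Fin N, ((v (k + 1) : ℝ) : ℂ) * z1 N ^ (j.val * k.val) * z1 N ^ j.val)
      = ∑ k : Fin N, ((v (k + 1) : ℝ) : ℂ) * z1 N ^ (j.val * k.val + j.val) from
      Finset.sum_congr rfl fun k _ => by rw [pow_add]; ring]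
    rw [dft]
    apply Fintype.sum_equiv (Equiv.addRight (1 : Fin N))
    intro k
    simp only [Equiv.coe_addRight]
    congr 1
    apply pow_z1_mod hN
    have hmod : (k.val + 1) % N = (k + 1 : Fin N).val % N := by
      rw [Fin.val_add, Fin.val_one']
      rw [Nat.mod_eq_of_lt (show 1 < N by omega)]
      rw [Nat.mod_mod_of_dvd _ dvd_rfl]
    calc (j.val * k.val + j.val) % N
        = (j.val * (k.val + 1)) % N := by rw [Nat.mul_add, Nat.mul_one]
      _ = (j.val * (k + 1 : Fin N).val) % N := Nat.ModEq.mul_left j.val hmod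
  have hzj : z1 N ^ j.val * (starRingEnd ℂ) (z1 N ^ j.val) = 1 := by
    rw [z1_conj_pow, mul_inv_cancel₀ (pow_ne_zero _ z1_ne_zero)]
  calc ∑ k : Fin N, ((v (k + 1) : ℝ) : ℂ) * z1 N ^ (j.val * k.val)
      = (∑ k : Fin N, ((v (k + 1) : ℝ) : ℂ) * z1 N ^ (j.val * k.val))
        * (z1 N ^ j.val * (starRingEnd ℂ) (z1 N ^ j.val)) := by rw [hzj, mul_one]
    _ = ((∑ k : Fin N, ((v (k + 1) : ℝ) : ℂ) * z1 N ^ (j.val * k.val)) * z1 N ^ j.val)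
        * (starRingEnd ℂ) (z1 N ^ j.val) := by ring
    _ = (starRingEnd ℂ) (z1 N ^ j.val) * dft N v j := by rw [key]; ring

lemma normSq_conj_z1_sub_one (a : ℕ) :
    Complex.normSq ((starRingEnd ℂ) (z1 N ^ a) - 1) = 2 - 2 * Real.cos (2*Real.pi*a/N) := by
  rw [z1_pow]
  have h1 : (starRingEnd ℂ) (Complex.exp (((2*Real.pi*a/N : ℝ) : ℂ) * Complex.I))
      = Complex.exp (((-(2*Real.pi*a/N) : ℝ) : ℂ) * Complex.I) := by
    rw [← Complex.exp_conj]
    congr 1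
    rw [_root_.map_mul, Complex.conj_ofReal, Complex.conj_I]
    push_cast
    ring
  rw [h1, Complex.normSq_apply, Complex.sub_re, Complex.sub_im,
    Complex.exp_ofReal_mul_I_re, Complex.exp_ofReal_mul_I_im, Complex.one_re, Complex.one_im]
  rw [Real.cos_neg, Real.sin_neg]
  have hpy := Real.sin_sq_add_cos_sq (2*Real.pi*a/N)
  nlinarith [hpy]

lemma cos_bound (hN : 3 ≤ N) {a : ℕ} (h1 : 1 ≤ a) (h2 : a ≤ N - 1) :
    Real.cos (2*Real.pi*a/N) ≤ Real.cos (2*Real.pi/N) := by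
  have hNpos : (0:ℝ) < N := by exact_mod_cast (by omega : 0 < N)
  have hpi := Real.pi_pos
  have ha1 : (1:ℝ) ≤ a := by exact_mod_cast h1
  have ha2 : (a:ℝ) ≤ N - 1 := by
    have : (a:ℝ) ≤ ((N - 1 : ℕ) : ℝ) := by exact_mod_cast h2
    rw [Nat.cast_sub (by omega)] at this
    simpa using this
  have hb : 2*Real.pi/N ≤ 2*Real.pi*a/N :=
    (div_le_div_iff_of_pos_right hNpos).mpr (by nlinarith)
  have hub : 2*Real.pi*a/N ≤ 2*Real.pi - 2*Real.pi/N := by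
    have he : 2*Real.pi - 2*Real.pi/N = 2*Real.pi*((N:ℝ)-1)/N := by
      field_simp
    rw [he]
    exact (div_le_div_iff_of_pos_right hNpos).mpr (by nlinarith)
  have hlow : (0:ℝ) ≤ 2*Real.pi/N := by positivity
  rcases le_or_gt (2*Real.pi*a/N) Real.pi with hle | hgt
  · exact Real.cos_le_cos_of_nonneg_of_le_pi hlow hle hb
  · have : Real.cos (2*Real.pi*a/N) = Real.cos (2*Real.pi - 2*Real.pi*a/N) := by
      rw [Real.cos_two_pi_sub]
    rw [this]
    apply Real.cos_le_cos_of_nonneg_of_le_pi hlow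
    · linarith
    · linarith

lemma wirtinger [NeZero N] (hN : 3 ≤ N) (v : Fin N → ℝ) (hv : ∑ k, v k = 0) :
    2*(1 - Real.cos (2*Real.pi/N)) * ∑ k, (v k)^2 ≤ ∑ k : Fin N, (v (k+1) - v k)^2 := by
  set v' : Fin N → ℝ := fun k => v (k+1) - v k with hv'
  have hd : ∀ j, dft N v' j = ((starRingEnd ℂ) (z1 N ^ j.val) - 1) * dft N v j := by
    intro j
    rw [dft]
    have hsp : ∀ k : Fin N, ((v' k : ℝ):ℂ) * z1 N ^ (j.val*k.val)
        = ((v (k+1) : ℝ):ℂ) * z1 N ^ (j.val*k.val) - ((v k : ℝ):ℂ) * z1 N ^ (j.val*k.val) := by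
      intro k
      rw [hv']
      push_cast
      ring
    rw [Finset.sum_congr rfl (fun k _ => hsp k), Finset.sum_sub_distrib, dft_shift hN v j]
    rw [show (∑ k : Fin N, ((v k : ℝ):ℂ) * z1 N ^ (j.val*k.val)) = dft N v j from rfl]
    ring
  have hnormd : ∀ j, Complex.normSq (dft N v' j)
      = (2 - 2*Real.cos (2*Real.pi*j.val/N)) * Complex.normSq (dft N v j) := by
    intro j
    rw [hd, Complex.normSq_mul, normSq_conj_z1_sub_one]
  have hc0 : dft N v 0 = 0 := by
    rw [dft]
    have hsp : ∀ k : Fin N, ((v k : ℝ):ℂ) * z1 N ^ ((0 : Fin N).val * k.val) = ((v k : ℝ):ℂ) := by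
      intro k
      rw [Fin.val_zero, Nat.zero_mul, pow_zero, mul_one]
    rw [Finset.sum_congr rfl (fun k _ => hsp k), ← Complex.ofReal_sum, hv]
    simp
  have hterm : ∀ j : Fin N, 2*(1 - Real.cos (2*Real.pi/N)) * Complex.normSq (dft N v j)
      ≤ Complex.normSq (dft N v' j) := by
    intro j
    rw [hnormd j]
    by_cases hj : j = 0
    · subst hj
      rw [hc0]
      simp
    · have hj1 : 1 ≤ j.val := by
        have : j.val ≠ 0 := fun hc => hj (Fin.ext (by rw [hc, Fin.val_zero]))
        omega
      have hj2 : j.val ≤ N - 1 := by have := j.isLt; omega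
      have hcb := cos_bound hN hj1 hj2
      have hnn := Complex.normSq_nonneg (dft N v j)
      nlinarith
  have hsum := Finset.sum_le_sum (fun j (_ : j ∈ Finset.univ) => hterm j)
  rw [parseval hN v', ← Finset.mul_sum, parseval hN v] at hsum
  have hNpos : (0:ℝ) < N := by exact_mod_cast (by omega : 0 < N)
  nlinarith [hsum, hNpos]

lemma z1_pow_re (a : ℕ) : (z1 N ^ a).re = Real.cos (2*Real.pi*a/N) := by
  rw [z1_pow, Complex.exp_ofReal_mul_I_re]

lemma z1_pow_im (a : ℕ) : (z1 N ^ a).im = Real.sin (2*Real.pi*a/N) := by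
  rw [z1_pow, Complex.exp_ofReal_mul_I_im]

lemma z1_sum (hN : 3 ≤ N) : ∑ j : Fin N, z1 N ^ (j.val) = 0 := by
  rw [Fin.sum_univ_eq_sum_range (fun m => z1 N ^ m)]
  have hz1 : z1 N ≠ 1 := by
    have := z1_pow_ne_one hN (m := 1) one_pos (by omega)
    simpa using this
  rw [geom_sum_eq hz1, z1_pow_N hN]
  simp

lemma cos_sum (hN : 3 ≤ N) : ∑ k : Fin N, Real.cos (2*Real.pi*k.val/N) = 0 := by
  have h := congrArg Complex.re (z1_sum hN)
  rw [Complex.re_sum] at h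
  rw [Finset.sum_congr rfl (fun k (_ : k ∈ Finset.univ) => (z1_pow_re k.val).symm)]
  simpa using h

lemma sin_sum (hN : 3 ≤ N) : ∑ k : Fin N, Real.sin (2*Real.pi*k.val/N) = 0 := by
  have h := congrArg Complex.im (z1_sum hN)
  rw [Complex.im_sum] at h
  rw [Finset.sum_congr rfl (fun k (_ : k ∈ Finset.univ) => (z1_pow_im k.val).symm)]
  simpa using h

lemma normSq_one_sub_z1 (hN : 3 ≤ N) :
    Complex.normSq (1 - z1 N) = 2 - 2*Real.cos (2*Real.pi/N) := by
  rw [← Complex.normSq_conj, map_sub, _root_.map_one]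
  rw [← Complex.normSq_neg, neg_sub]
  have := normSq_conj_z1_sub_one (N := N) 1
  rw [pow_one] at this
  rw [this]
  norm_num

lemma edge_trig [NeZero N] (hN : 3 ≤ N) (k : Fin N) :
    (Real.cos (2*Real.pi*k.val/N) - Real.cos (2*Real.pi*((k+1 : Fin N)).val/N))^2
      + (Real.sin (2*Real.pi*k.val/N) - Real.sin (2*Real.pi*((k+1 : Fin N)).val/N))^2
      = 2 - 2*Real.cos (2*Real.pi/N) := by
  have hpow : z1 N ^ ((k+1 : Fin N)).val = z1 N ^ (k.val + 1) := by
    apply pow_z1_mod hN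
    rw [Fin.val_add, Fin.val_one', Nat.mod_eq_of_lt (show 1 < N by omega),
      Nat.mod_mod_of_dvd _ dvd_rfl]
  have hns : Complex.normSq (z1 N ^ k.val - z1 N ^ ((k+1 : Fin N)).val)
      = (Real.cos (2*Real.pi*k.val/N) - Real.cos (2*Real.pi*((k+1 : Fin N)).val/N))^2
        + (Real.sin (2*Real.pi*k.val/N) - Real.sin (2*Real.pi*((k+1 : Fin N)).val/N))^2 := by
    rw [Complex.normSq_apply, Complex.sub_re, Complex.sub_im, z1_pow_re, z1_pow_re,
      z1_pow_im, z1_pow_im]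
    ring
  rw [← hns, hpow, pow_succ,
    show z1 N ^ k.val - z1 N ^ k.val * z1 N = z1 N ^ k.val * (1 - z1 N) from by ring,
    Complex.normSq_mul]
  have h1 : Complex.normSq (z1 N ^ k.val) = 1 := by
    rw [Complex.normSq_apply, z1_pow_re, z1_pow_im]
    have := Real.sin_sq_add_cos_sq (2*Real.pi*k.val/N)
    nlinarith
  rw [h1, normSq_one_sub_z1 hN, one_mul]

lemma trig_sq_one (θ : ℝ) : (Real.cos θ)^2 + (Real.sin θ)^2 = 1 := by
  have := Real.sin_sq_add_cos_sq θ
  linarith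

lemma norm_sq_euc (v : EuclideanSpace ℝ (Fin N)) : ‖v‖^2 = ∑ i, (v i)^2 := by
  rw [← real_inner_self_eq_norm_sq, euc_inner]
  exact Finset.sum_congr rfl fun i _ => by ring

lemma lambda2_upper (hN : 3 ≤ N) (w : Fin N → Fin N → ℝ) (hw : ∀ i j, w i j = w j i)
    (hW : totalW N (cycleGraph N) w = 1) :
    lambda2 (graphLap N (cycleGraph N) w) ≤ 2 * (1 - Real.cos (2 * Real.pi / N)) / N := by
  haveI : NeZero N := ⟨by omega⟩
  set L := graphLap N (cycleGraph N) w with hL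
  have hM : L.IsHermitian := graphLap_isHermitian _ w hw
  have hNpos : (0:ℝ) < N := by exact_mod_cast (by omega : 0 < N)
  have hpi := Real.pi_pos
  set c : ℝ := 2 * (1 - Real.cos (2 * Real.pi / N)) / N with hc
  have hcos1 : Real.cos (2*Real.pi/N) ≤ 1 := Real.cos_le_one _
  have hc0 : 0 ≤ c := by
    apply div_nonneg _ hNpos.le
    nlinarith
  set u : EuclideanSpace ℝ (Fin N) := tE (fun _ => 1) with hu'
  set x : EuclideanSpace ℝ (Fin N) := tE (fun k => Real.cos (2*Real.pi*k.val/N)) with hx'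
  set y : EuclideanSpace ℝ (Fin N) := tE (fun k => Real.sin (2*Real.pi*k.val/N)) with hy'
  have hu0 : u ≠ 0 := by
    intro h
    have h1 : u ⟨0, by omega⟩ = 0 := by rw [h]; rfl
    exact one_ne_zero h1
  have hx0 : x ≠ 0 := by
    intro h
    have h1 : x ⟨0, by omega⟩ = 0 := by rw [h]; rfl
    have h2 : Real.cos (2*Real.pi*((0:ℕ):ℝ)/N) = 0 := h1
    norm_num at h2
  have hy0 : y ≠ 0 := by
    intro h
    have h1 : y ⟨1, by omega⟩ = 0 := by rw [h]; rfl
    have h2 : Real.sin (2*Real.pi*((1:ℕ):ℝ)/N) = 0 := h1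
    have h3 : (0:ℝ) < Real.sin (2*Real.pi*((1:ℕ):ℝ)/N) := by
      apply Real.sin_pos_of_pos_of_lt_pi
      · positivity
      · rw [div_lt_iff₀ hNpos]
        push_cast
        nlinarith [show (3:ℝ) ≤ N from by exact_mod_cast hN]
    linarith
  have hMu : L *ᵥ (u : Fin N → ℝ) = 0 := graphLap_mulVec_ones _ w
  have hux : ⟪u, x⟫ = 0 := by
    rw [euc_inner]
    show ∑ i : Fin N, (1:ℝ) * Real.cos (2*Real.pi*i.val/N) = 0
    rw [Finset.sum_congr rfl fun i _ => one_mul _]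
    exact cos_sum hN
  have huy : ⟪u, y⟫ = 0 := by
    rw [euc_inner]
    show ∑ i : Fin N, (1:ℝ) * Real.sin (2*Real.pi*i.val/N) = 0
    rw [Finset.sum_congr rfl fun i _ => one_mul _]
    exact sin_sum hN
  have hQx : ⟪x, tE (L *ᵥ x)⟫ = ∑ k, w k (k+1) * ((x k) - x (k+1))^2 := by
    rw [euc_inner]
    exact quad_form_cycle hN w hw x
  have hQy : ⟪y, tE (L *ᵥ y)⟫ = ∑ k, w k (k+1) * ((y k) - y (k+1))^2 := by
    rw [euc_inner]
    exact quad_form_cycle hN w hw y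
  have hQsum : ⟪x, tE (L *ᵥ x)⟫ + ⟪y, tE (L *ᵥ y)⟫ = 2*(1 - Real.cos (2*Real.pi/N)) := by
    rw [hQx, hQy, ← Finset.sum_add_distrib]
    have hpt : ∀ k : Fin N, w k (k+1) * ((x k) - x (k+1))^2 + w k (k+1) * ((y k) - y (k+1))^2
        = w k (k+1) * (2 - 2*Real.cos (2*Real.pi/N)) := by
      intro k
      have he : ((x k) - x (k+1))^2 + ((y k) - y (k+1))^2 = 2 - 2*Real.cos (2*Real.pi/N) :=
        edge_trig hN k
      calc w k (k+1) * ((x k) - x (k+1))^2 + w k (k+1) * ((y k) - y (k+1))^2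
          = w k (k+1) * (((x k) - x (k+1))^2 + ((y k) - y (k+1))^2) := by ring
        _ = w k (k+1) * (2 - 2*Real.cos (2*Real.pi/N)) := by rw [he]
    rw [Finset.sum_congr rfl (fun k _ => hpt k), ← Finset.sum_mul,
      ← totalW_cycle hN w hw, hW]
    ring
  have hnorm : ‖x‖^2 + ‖y‖^2 = N := by
    rw [norm_sq_euc, norm_sq_euc, ← Finset.sum_add_distrib]
    have h1 : ∀ k : Fin N, (x k)^2 + (y k)^2 = 1 := fun k => trig_sq_one _
    rw [Finset.sum_congr rfl (fun k _ => h1 k), Finset.sum_const, Finset.card_univ,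
      Fintype.card_fin]
    simp
  have hcN : c * (N:ℝ) = 2*(1 - Real.cos (2*Real.pi/N)) := by
    rw [hc]
    field_simp
  have hkey : ⟪x, tE (L *ᵥ x)⟫ ≤ c * ‖x‖^2 ∨ ⟪y, tE (L *ᵥ y)⟫ ≤ c * ‖y‖^2 := by
    by_contra hcon
    push_neg at hcon
    obtain ⟨h1, h2⟩ := hcon
    have h3 : c * (‖x‖^2 + ‖y‖^2) < ⟪x, tE (L *ᵥ x)⟫ + ⟪y, tE (L *ᵥ y)⟫ := by
      have := mul_add c (‖x‖^2) (‖y‖^2)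
      linarith
    rw [hnorm, hQsum, hcN] at h3
    linarith
  rcases hkey with h | h
  · exact lambda2_le_gen hM hu0 hx0 hMu hux hc0 h
  · exact lambda2_le_gen hM hu0 hy0 hMu huy hc0 h

lemma totalW_uniform (hN : 3 ≤ N) :
    totalW N (cycleGraph N) (fun _ _ => 1/(N:ℝ)) = 1 := by
  haveI : NeZero N := ⟨by omega⟩
  have hNpos : (0:ℝ) < N := by exact_mod_cast (by omega : 0 < N)
  rw [totalW_cycle hN (fun _ _ => 1/(N:ℝ)) (fun _ _ => rfl)]
  rw [Finset.sum_const, Finset.card_univ, Fintype.card_fin]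
  rw [nsmul_eq_mul]
  field_simp

lemma lambda2_uniform (hN : 3 ≤ N) :
    lambda2 (graphLap N (cycleGraph N) (fun _ _ => 1/(N:ℝ)))
      = 2*(1 - Real.cos (2*Real.pi/N))/N := by
  haveI : NeZero N := ⟨by omega⟩
  have hNpos : (0:ℝ) < N := by exact_mod_cast (by omega : 0 < N)
  apply le_antisymm
  · exact lambda2_upper hN (fun _ _ => 1/(N:ℝ)) (fun _ _ => rfl) (totalW_uniform hN)
  · apply le_lambda2_gen (by omega) (graphLap_isHermitian (cycleGraph N) (fun _ _ => 1/(N:ℝ)) (fun _ _ => rfl))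
      (u := tE (fun _ => 1))
    intro v hv
    have hv0 : ∑ i, v i = 0 := by
      rw [euc_inner] at hv
      rw [← hv]
      exact Finset.sum_congr rfl fun i _ => (one_mul _).symm
    have hquad : ⟪v, tE (graphLap N (cycleGraph N) (fun _ _ => 1/(N:ℝ)) *ᵥ v)⟫
        = ∑ k, (1/(N:ℝ)) * (v k - v (k+1))^2 := by
      rw [euc_inner]
      exact quad_form_cycle hN (fun _ _ => 1/(N:ℝ)) (fun _ _ => rfl) v
    rw [hquad, norm_sq_euc]
    have hw := wirtinger hN (fun i => v i) hv0
    have hsq : ∑ k : Fin N, ((fun i => v i) (k+1) - (fun i => v i) k)^2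
        = ∑ k : Fin N, (v k - v (k+1))^2 :=
      Finset.sum_congr rfl fun k _ => by ring
    rw [hsq] at hw
    have hms : (∑ k : Fin N, (1/(N:ℝ)) * (v k - v (k+1))^2)
        = (∑ k : Fin N, (v k - v (k+1))^2) / N := by
      rw [Finset.sum_div]
      exact Finset.sum_congr rfl fun k _ => by ring
    rw [hms]
    calc 2*(1 - Real.cos (2*Real.pi/N))/N * ∑ i, (v i)^2
        = (2*(1 - Real.cos (2*Real.pi/N)) * ∑ i, (v i)^2)/N := by ring
      _ ≤ (∑ k : Fin N, (v k - v (k+1))^2) / N := by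
          exact (div_le_div_iff_of_pos_right hNpos).mpr hw

end Aux

/-- On the cycle `C_N`, among weight functions of total weight `1`, the algebraic
connectivity satisfies `λ₂ ≤ 2(1 − cos(2π/N))/N`, with equality at the uniform weight
`1/N`; consequently the optimal SLEM of the FDTQC problem in the case `N = d²+1`,
namely the infimum of `1 − λ₂` over such weights, equals `(N − 2(1 − cos(2π/N)))/N`. -/
theorem cycle_graph_optimal_slem_case_dsq_plus_one (N : ℕ) (hN : 3 ≤ N) :
    (∀ w : Fin N → Fin N → ℝ, (∀ i j, w i j = w j i) → totalW N (cycleGraph N) w = 1 →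
      lambda2 (graphLap N (cycleGraph N) w) ≤ 2 * (1 - Real.cos (2 * Real.pi / N)) / N) ∧
    totalW N (cycleGraph N) (fun _ _ => 1 / (N : ℝ)) = 1 ∧
    lambda2 (graphLap N (cycleGraph N) (fun _ _ => 1 / (N : ℝ))) =
      2 * (1 - Real.cos (2 * Real.pi / N)) / N ∧
    sInf { s : ℝ | ∃ w : Fin N → Fin N → ℝ, (∀ i j, w i j = w j i) ∧
        totalW N (cycleGraph N) w = 1 ∧ s = 1 - lambda2 (graphLap N (cycleGraph N) w) } =
      ((N : ℝ) - 2 * (1 - Real.cos (2 * Real.pi / N))) / N := by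
  have hNpos : (0:ℝ) < N := by exact_mod_cast (by omega : 0 < N)
  refine ⟨fun w hw hW => lambda2_upper hN w hw hW, totalW_uniform hN, lambda2_uniform hN, ?_⟩
  have hEq : ((N : ℝ) - 2 * (1 - Real.cos (2 * Real.pi / N))) / N
      = 1 - 2 * (1 - Real.cos (2 * Real.pi / N)) / N := by
    field_simp
  apply IsLeast.csInf_eq
  constructor
  · exact ⟨fun _ _ => 1/(N:ℝ), fun _ _ => rfl, totalW_uniform hN,
      by rw [lambda2_uniform hN]; exact hEq⟩
  · rintro s ⟨w, hw, hW, rfl⟩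
    rw [hEq]
    have := lambda2_upper hN w hw hW
    linarith
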